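/- Suppose L > 0 satisfies ‖T(v,ξ) − T(v,ξ')‖ ≤ L‖ξ − ξ'‖ for all v ∈ V and all ξ, ξ' ∈ Ξ, and let Q₁, Q₂ be Borel probability measures on Ξ with finite first moments such that ξ ↦ û(f,ξ,t) is Q₁- and Q₂-integrable for every f ∈ 𝔽. Then for every t > 0, sup_{f∈𝔽} ‖ ∫_Ξ û(f,ξ,t) dQ₁(ξ) − ∫_Ξ û(f,ξ,t) dQ₂(ξ) ‖ ≤ L ‖Δᵀ‖ (θ1 + θ2) · dl_K(Q₁, Q₂). -/

import Mathlib

open MeasureTheory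

/-- The smoothed lateness penalty `h(z,t)`: `0` for `z < -t`, `(z+t)^2/(4t)` for
`-t ≤ z ≤ t`, and `z` for `z > t`. -/
noncomputable def hpen (t z : ℝ) : ℝ :=
  if z < -t then 0 else if z ≤ t then (z + t) ^ 2 / (4 * t) else z

variable {A N k : ℕ}

/-- The path travel time `C(f,ξ) = Δᵀ T(Δf, ξ)`, where the arc–path incidence matrix
`Δ` is encoded as a continuous linear map and `Δᵀ` as its (Euclidean) adjoint. -/
noncomputable def pathTime (Δ : EuclideanSpace ℝ (Fin N) →L[ℝ] EuclideanSpace ℝ (Fin A))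
    (T : EuclideanSpace ℝ (Fin A) → EuclideanSpace ℝ (Fin k) → EuclideanSpace ℝ (Fin A))
    (f : EuclideanSpace ℝ (Fin N)) (ξ : EuclideanSpace ℝ (Fin k)) :
    EuclideanSpace ℝ (Fin N) :=
  ContinuousLinearMap.adjoint Δ (T (Δ f) ξ)

/-- The smoothed disutility `û(f,ξ,t)` with components
`û_r = θ0 d_r + θ1 C_r(f,ξ) + θ2 h(C_r(f,ξ) − τ_r, t)`. -/
noncomputable def uhat (Δ : EuclideanSpace ℝ (Fin N) →L[ℝ] EuclideanSpace ℝ (Fin A))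
    (θ0 θ1 θ2 : ℝ) (d τ : EuclideanSpace ℝ (Fin N))
    (T : EuclideanSpace ℝ (Fin A) → EuclideanSpace ℝ (Fin k) → EuclideanSpace ℝ (Fin A))
    (f : EuclideanSpace ℝ (Fin N)) (ξ : EuclideanSpace ℝ (Fin k)) (t : ℝ) :
    EuclideanSpace ℝ (Fin N) :=
  WithLp.toLp 2 (fun r => θ0 * d r + θ1 * pathTime Δ T f ξ r + θ2 * hpen t (pathTime Δ T f ξ r - τ r))

/-- The Kantorovich distance between two Borel measures:
`dl_K(μ,ν) = sup {|∫ g dμ − ∫ g dν| : |g(x) − g(y)| ≤ ‖x − y‖ for all x, y}`. -/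
noncomputable def Kdist {E : Type*} [MeasurableSpace E] [NormedAddCommGroup E]
    (μ ν : Measure E) : ℝ :=
  sSup {x : ℝ | ∃ g : E → ℝ, (∀ a b : E, |g a - g b| ≤ ‖a - b‖) ∧
    x = |(∫ y, g y ∂μ) - ∫ y, g y ∂ν|}

lemma hpen_sub_le {t : ℝ} (ht : 0 < t) {z z' : ℝ} (h : z' ≤ z) :
    0 ≤ hpen t z - hpen t z' ∧ hpen t z - hpen t z' ≤ z - z' := by
  unfold hpen
  have h4t : (0:ℝ) < 4 * t := by linarith
  split_ifs with h1 h2 h3 h4 h5 h6 h7 h8 <;> constructor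
  · linarith
  · linarith
  · exfalso; linarith
  · exfalso; linarith
  · exfalso; linarith
  · exfalso; linarith
  · rw [sub_zero]; positivity
  · rw [sub_zero, div_le_iff₀ h4t]; nlinarith
  · rw [div_sub_div_same]
    apply div_nonneg _ (le_of_lt h4t); nlinarith
  · rw [div_sub_div_same, div_le_iff₀ h4t]
    nlinarith [mul_nonneg (sub_nonneg.2 h) (by linarith : (0:ℝ) ≤ 4*t - (z+z'+2*t))]
  · exfalso; linarith
  · exfalso; linarith
  · rw [sub_zero]; linarith
  · rw [sub_zero]; linarith
  · have hq : (z' + t) ^ 2 / (4 * t) ≤ t := by rw [div_le_iff₀ h4t]; nlinarith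
    linarith
  · have hq2 : z' ≤ (z' + t) ^ 2 / (4 * t) := by
      rw [le_div_iff₀ h4t]; nlinarith [sq_nonneg (z' - t)]
    linarith
  · linarith
  · linarith

lemma hpen_lip {t : ℝ} (ht : 0 < t) (z z' : ℝ) :
    |hpen t z - hpen t z'| ≤ |z - z'| := by
  rcases le_total z' z with h | h
  · obtain ⟨h1, h2⟩ := hpen_sub_le ht h
    rw [abs_of_nonneg h1, abs_of_nonneg (by linarith : (0:ℝ) ≤ z - z')]; exact h2
  · obtain ⟨h1, h2⟩ := hpen_sub_le ht h
    rw [abs_sub_comm, abs_sub_comm z, abs_of_nonneg h1,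
      abs_of_nonneg (by linarith : (0:ℝ) ≤ z' - z)]; exact h2

lemma euclid_norm_le {n : ℕ} (c : ℝ) (hc : 0 ≤ c) (u v : EuclideanSpace ℝ (Fin n))
    (h : ∀ i, |u i| ≤ c * |v i|) : ‖u‖ ≤ c * ‖v‖ := by
  rw [EuclideanSpace.norm_eq, EuclideanSpace.norm_eq]
  rw [← Real.sqrt_sq hc, ← Real.sqrt_mul (sq_nonneg c)]
  apply Real.sqrt_le_sqrt
  rw [Finset.mul_sum]
  apply Finset.sum_le_sum
  intro i _
  calc ‖u i‖ ^ 2 = |u i| ^ 2 := by rw [Real.norm_eq_abs]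
    _ ≤ (c * |v i|) ^ 2 := by apply pow_le_pow_left₀ (abs_nonneg _) (h i)
    _ = c ^ 2 * ‖v i‖ ^ 2 := by rw [Real.norm_eq_abs]; ring

lemma lip_of_prop {m : ℕ} {g : EuclideanSpace ℝ (Fin m) → ℝ}
    (hg : ∀ a b, |g a - g b| ≤ ‖a - b‖) : LipschitzWith 1 g := by
  apply LipschitzWith.of_dist_le_mul
  intro a b
  simpa [Real.dist_eq, dist_eq_norm] using hg a b

lemma lip_sub_integrable {m : ℕ} {g : EuclideanSpace ℝ (Fin m) → ℝ}
    (hg : ∀ a b, |g a - g b| ≤ ‖a - b‖)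
    (μ : Measure (EuclideanSpace ℝ (Fin m))) [IsProbabilityMeasure μ]
    (hmom : Integrable (fun ξ => ‖ξ‖) μ) :
    Integrable (fun ξ => g ξ - g 0) μ ∧ |∫ ξ, (g ξ - g 0) ∂μ| ≤ ∫ ξ, ‖ξ‖ ∂μ := by
  have hbd : ∀ ξ, |g ξ - g 0| ≤ ‖ξ‖ := by
    intro ξ; simpa using hg ξ 0
  have hmeas : AEStronglyMeasurable (fun ξ => g ξ - g 0) μ :=
    ((lip_of_prop hg).continuous.sub continuous_const).aestronglyMeasurable
  have hInt : Integrable (fun ξ => g ξ - g 0) μ := by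
    apply Integrable.mono' hmom hmeas
    exact Filter.Eventually.of_forall fun ξ => by
      rw [Real.norm_eq_abs]; exact hbd ξ
  refine ⟨hInt, ?_⟩
  calc |∫ ξ, (g ξ - g 0) ∂μ| ≤ ∫ ξ, |g ξ - g 0| ∂μ := by
        simpa [Real.norm_eq_abs] using norm_integral_le_integral_norm (fun ξ => g ξ - g 0) (μ := μ)
    _ ≤ ∫ ξ, ‖ξ‖ ∂μ := integral_mono hInt.abs hmom fun ξ => hbd ξ

lemma kdist_mem_bound {m : ℕ} (μ ν : Measure (EuclideanSpace ℝ (Fin m)))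
    [IsProbabilityMeasure μ] [IsProbabilityMeasure ν]
    (hm₁ : Integrable (fun ξ => ‖ξ‖) μ) (hm₂ : Integrable (fun ξ => ‖ξ‖) ν)
    {g : EuclideanSpace ℝ (Fin m) → ℝ} (hg : ∀ a b, |g a - g b| ≤ ‖a - b‖) :
    |(∫ y, g y ∂μ) - ∫ y, g y ∂ν| ≤ (∫ ξ, ‖ξ‖ ∂μ) + ∫ ξ, ‖ξ‖ ∂ν := by
  obtain ⟨hI₁, hb₁⟩ := lip_sub_integrable hg μ hm₁
  obtain ⟨hI₂, hb₂⟩ := lip_sub_integrable hg ν hm₂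
  have e₁ : (∫ y, g y ∂μ) = (∫ ξ, (g ξ - g 0) ∂μ) + g 0 := by
    have h := integral_add hI₁ (integrable_const (μ := μ) (g 0))
    simp only [integral_const, measure_univ, ENNReal.toReal_one, probReal_univ, one_smul, smul_eq_mul, one_mul] at h
    rw [← h]
    exact integral_congr_ae (Filter.Eventually.of_forall fun ξ => by ring)
  have e₂ : (∫ y, g y ∂ν) = (∫ ξ, (g ξ - g 0) ∂ν) + g 0 := by
    have h := integral_add hI₂ (integrable_const (μ := ν) (g 0))
    simp only [integral_const, measure_univ, ENNReal.toReal_one, probReal_univ, one_smul, smul_eq_mul, one_mul] at h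
    rw [← h]
    exact integral_congr_ae (Filter.Eventually.of_forall fun ξ => by ring)
  rw [e₁, e₂]
  have : (∫ ξ, (g ξ - g 0) ∂μ) + g 0 - ((∫ ξ, (g ξ - g 0) ∂ν) + g 0)
      = (∫ ξ, (g ξ - g 0) ∂μ) - (∫ ξ, (g ξ - g 0) ∂ν) := by ring
  rw [this]
  calc |(∫ ξ, (g ξ - g 0) ∂μ) - (∫ ξ, (g ξ - g 0) ∂ν)|
      ≤ |∫ ξ, (g ξ - g 0) ∂μ| + |∫ ξ, (g ξ - g 0) ∂ν| := abs_sub _ _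
    _ ≤ (∫ ξ, ‖ξ‖ ∂μ) + ∫ ξ, ‖ξ‖ ∂ν := add_le_add hb₁ hb₂

lemma kdist_bddAbove {m : ℕ} (μ ν : Measure (EuclideanSpace ℝ (Fin m)))
    [IsProbabilityMeasure μ] [IsProbabilityMeasure ν]
    (hm₁ : Integrable (fun ξ => ‖ξ‖) μ) (hm₂ : Integrable (fun ξ => ‖ξ‖) ν) :
    BddAbove {x : ℝ | ∃ g : EuclideanSpace ℝ (Fin m) → ℝ,
      (∀ a b, |g a - g b| ≤ ‖a - b‖) ∧ x = |(∫ y, g y ∂μ) - ∫ y, g y ∂ν|} := by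
  refine ⟨(∫ ξ, ‖ξ‖ ∂μ) + ∫ ξ, ‖ξ‖ ∂ν, ?_⟩
  rintro x ⟨g, hg, rfl⟩
  exact kdist_mem_bound μ ν hm₁ hm₂ hg

lemma le_kdist {m : ℕ} (μ ν : Measure (EuclideanSpace ℝ (Fin m)))
    [IsProbabilityMeasure μ] [IsProbabilityMeasure ν]
    (hm₁ : Integrable (fun ξ => ‖ξ‖) μ) (hm₂ : Integrable (fun ξ => ‖ξ‖) ν)
    {g : EuclideanSpace ℝ (Fin m) → ℝ} (hg : ∀ a b, |g a - g b| ≤ ‖a - b‖) :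
    |(∫ y, g y ∂μ) - ∫ y, g y ∂ν| ≤ Kdist μ ν :=
  le_csSup (kdist_bddAbove μ ν hm₁ hm₂) ⟨g, hg, rfl⟩

lemma kdist_nonneg {m : ℕ} (μ ν : Measure (EuclideanSpace ℝ (Fin m)))
    [IsProbabilityMeasure μ] [IsProbabilityMeasure ν]
    (hm₁ : Integrable (fun ξ => ‖ξ‖) μ) (hm₂ : Integrable (fun ξ => ‖ξ‖) ν) :
    0 ≤ Kdist μ ν := by
  have := le_kdist μ ν hm₁ hm₂ (g := fun _ => 0) (by simp)
  simpa using this.trans_eq' (by simp)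

lemma uhat_diff_norm (Δ : EuclideanSpace ℝ (Fin N) →L[ℝ] EuclideanSpace ℝ (Fin A))
    {θ0 θ1 θ2 : ℝ} (hθ1 : 0 ≤ θ1) (hθ2 : 0 ≤ θ2)
    (d τ : EuclideanSpace ℝ (Fin N))
    (T : EuclideanSpace ℝ (Fin A) → EuclideanSpace ℝ (Fin k) → EuclideanSpace ℝ (Fin A))
    (f : EuclideanSpace ℝ (Fin N)) {t : ℝ} (ht : 0 < t)
    (ξ ξ' : EuclideanSpace ℝ (Fin k)) :
    ‖uhat Δ θ0 θ1 θ2 d τ T f ξ t - uhat Δ θ0 θ1 θ2 d τ T f ξ' t‖ ≤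
      (θ1 + θ2) * ‖pathTime Δ T f ξ - pathTime Δ T f ξ'‖ := by
  apply euclid_norm_le _ (by linarith)
  intro r
  have happ : (uhat Δ θ0 θ1 θ2 d τ T f ξ t - uhat Δ θ0 θ1 θ2 d τ T f ξ' t) r
      = uhat Δ θ0 θ1 θ2 d τ T f ξ t r - uhat Δ θ0 θ1 θ2 d τ T f ξ' t r := rfl
  have happ2 : (pathTime Δ T f ξ - pathTime Δ T f ξ') r
      = pathTime Δ T f ξ r - pathTime Δ T f ξ' r := rfl
  rw [happ, happ2]
  set c := pathTime Δ T f ξ r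
  set c' := pathTime Δ T f ξ' r
  have h1 : |hpen t (c - τ r) - hpen t (c' - τ r)| ≤ |c - c'| := by
    have := hpen_lip ht (c - τ r) (c' - τ r)
    simpa using this
  have e1 : uhat Δ θ0 θ1 θ2 d τ T f ξ t r - uhat Δ θ0 θ1 θ2 d τ T f ξ' t r
      = θ1 * (c - c') + θ2 * (hpen t (c - τ r) - hpen t (c' - τ r)) := by
    simp only [uhat, PiLp.toLp_apply]; ring
  rw [e1]
  calc |θ1 * (c - c') + θ2 * (hpen t (c - τ r) - hpen t (c' - τ r))|
      ≤ |θ1 * (c - c')| + |θ2 * (hpen t (c - τ r) - hpen t (c' - τ r))| := abs_add_le _ _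
    _ = θ1 * |c - c'| + θ2 * |hpen t (c - τ r) - hpen t (c' - τ r)| := by
        rw [abs_mul, abs_mul, abs_of_nonneg hθ1, abs_of_nonneg hθ2]
    _ ≤ θ1 * |c - c'| + θ2 * |c - c'| := by nlinarith
    _ = (θ1 + θ2) * |c - c'| := by ring

/-- if `T(v,·)` is `L`-Lipschitz on `Ξ` uniformly for `v ∈ V = Δ(𝔽)`, then
for probability measures `Q₁, Q₂` on `Ξ` with finite first moments, for every `t > 0`,
`sup_{f∈𝔽} ‖∫_Ξ û(f,ξ,t) dQ₁ − ∫_Ξ û(f,ξ,t) dQ₂‖ ≤ L ‖Δᵀ‖ (θ1 + θ2) · dl_K(Q₁, Q₂)`. -/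
theorem smoothed_expected_disutility_kantorovich_bound
    (A N k : ℕ) (Δ : EuclideanSpace ℝ (Fin N) →L[ℝ] EuclideanSpace ℝ (Fin A))
    (θ0 θ1 θ2 : ℝ) (hθ0 : 0 ≤ θ0) (hθ1 : 0 ≤ θ1) (hθ2 : 0 ≤ θ2)
    (d τ : EuclideanSpace ℝ (Fin N)) (Ξ : Set (EuclideanSpace ℝ (Fin k)))
    (T : EuclideanSpace ℝ (Fin A) → EuclideanSpace ℝ (Fin k) → EuclideanSpace ℝ (Fin A))
    (𝔽 : Set (EuclideanSpace ℝ (Fin N))) (h𝔽 : IsCompact 𝔽)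
    (L : ℝ) (hL : 0 < L)
    (hT : ∀ v ∈ Δ '' 𝔽, ∀ ξ ∈ Ξ, ∀ ξ' ∈ Ξ, ‖T v ξ - T v ξ'‖ ≤ L * ‖ξ - ξ'‖)
    (Q₁ Q₂ : Measure (EuclideanSpace ℝ (Fin k)))
    [IsProbabilityMeasure Q₁] [IsProbabilityMeasure Q₂]
    (hQ₁Ξ : Q₁ Ξᶜ = 0) (hQ₂Ξ : Q₂ Ξᶜ = 0)
    (hmom₁ : Integrable (fun ξ => ‖ξ‖) Q₁) (hmom₂ : Integrable (fun ξ => ‖ξ‖) Q₂)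
    (hint : ∀ f ∈ 𝔽, ∀ t : ℝ, 0 < t →
      IntegrableOn (fun ξ => uhat Δ θ0 θ1 θ2 d τ T f ξ t) Ξ Q₁ ∧
      IntegrableOn (fun ξ => uhat Δ θ0 θ1 θ2 d τ T f ξ t) Ξ Q₂) :
    ∀ t : ℝ, 0 < t → ∀ f ∈ 𝔽,
      ‖(∫ ξ in Ξ, uhat Δ θ0 θ1 θ2 d τ T f ξ t ∂Q₁) -
          ∫ ξ in Ξ, uhat Δ θ0 θ1 θ2 d τ T f ξ t ∂Q₂‖ ≤
        L * ‖ContinuousLinearMap.adjoint Δ‖ * (θ1 + θ2) * Kdist Q₁ Q₂ := by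
  intro t ht f hf
  obtain ⟨hint₁, hint₂⟩ := hint f hf t ht
  have hae₁ : ∀ᵐ ξ ∂Q₁, ξ ∈ Ξ := by
    rw [MeasureTheory.ae_iff]; exact hQ₁Ξ
  have hae₂ : ∀ᵐ ξ ∂Q₂, ξ ∈ Ξ := by
    rw [MeasureTheory.ae_iff]; exact hQ₂Ξ
  have hres₁ : Q₁.restrict Ξ = Q₁ := Measure.restrict_eq_self_of_ae_mem hae₁
  have hres₂ : Q₂.restrict Ξ = Q₂ := Measure.restrict_eq_self_of_ae_mem hae₂
  rw [hres₁, hres₂]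
  set F : EuclideanSpace ℝ (Fin k) → EuclideanSpace ℝ (Fin N) :=
    fun ξ => uhat Δ θ0 θ1 θ2 d τ T f ξ t with hFdef
  have hI₁ : Integrable F Q₁ := by rw [← hres₁]; exact hint₁
  have hI₂ : Integrable F Q₂ := by rw [← hres₂]; exact hint₂
  set K := L * ‖ContinuousLinearMap.adjoint Δ‖ * (θ1 + θ2) with hKdef
  have hKnn : 0 ≤ K := by
    apply mul_nonneg (mul_nonneg (le_of_lt hL) (norm_nonneg _)); linarith
  set D := (∫ ξ, F ξ ∂Q₁) - ∫ ξ, F ξ ∂Q₂ with hDdef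
  rcases eq_or_ne D 0 with hD0 | hD0
  · rw [hD0, norm_zero]
    exact mul_nonneg hKnn (kdist_nonneg Q₁ Q₂ hmom₁ hmom₂)
  set e := ‖D‖⁻¹ • D with he
  have hDnorm : ‖D‖ ≠ 0 := norm_ne_zero_iff.mpr hD0
  have hee : ‖e‖ = 1 := by
    rw [he, norm_smul, norm_inv, norm_norm, inv_mul_cancel₀ hDnorm]
  set g : EuclideanSpace ℝ (Fin k) → ℝ := fun ξ => @inner ℝ _ _ e (F ξ) with hgdef
  have hglip : ∀ ξ ∈ Ξ, ∀ ξ' ∈ Ξ, |g ξ - g ξ'| ≤ K * ‖ξ - ξ'‖ := by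
    intro ξ hξ ξ' hξ'
    have h1 : g ξ - g ξ' = @inner ℝ _ _ e (F ξ - F ξ') := by
      rw [hgdef]; simp [inner_sub_right]
    rw [h1]
    have hCd : pathTime Δ T f ξ - pathTime Δ T f ξ'
        = ContinuousLinearMap.adjoint Δ (T (Δ f) ξ - T (Δ f) ξ') := by
      simp [pathTime, map_sub]
    calc |@inner ℝ _ _ e (F ξ - F ξ')| ≤ ‖e‖ * ‖F ξ - F ξ'‖ := abs_real_inner_le_norm _ _
      _ = ‖F ξ - F ξ'‖ := by rw [hee, one_mul]
      _ ≤ (θ1 + θ2) * ‖pathTime Δ T f ξ - pathTime Δ T f ξ'‖ :=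
          uhat_diff_norm Δ hθ1 hθ2 d τ T f ht ξ ξ'
      _ ≤ (θ1 + θ2) * (‖ContinuousLinearMap.adjoint Δ‖ * (L * ‖ξ - ξ'‖)) := by
          apply mul_le_mul_of_nonneg_left _ (by linarith : (0:ℝ) ≤ θ1 + θ2)
          rw [hCd]
          calc ‖ContinuousLinearMap.adjoint Δ (T (Δ f) ξ - T (Δ f) ξ')‖
              ≤ ‖ContinuousLinearMap.adjoint Δ‖ * ‖T (Δ f) ξ - T (Δ f) ξ'‖ :=
                ContinuousLinearMap.le_opNorm _ _
            _ ≤ ‖ContinuousLinearMap.adjoint Δ‖ * (L * ‖ξ - ξ'‖) := by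
                apply mul_le_mul_of_nonneg_left _ (norm_nonneg _)
                exact hT (Δ f) ⟨f, hf, rfl⟩ ξ hξ ξ' hξ'
      _ = K * ‖ξ - ξ'‖ := by rw [hKdef]; ring
  have hlipon : LipschitzOnWith (Real.toNNReal K) g Ξ := by
    rw [lipschitzOnWith_iff_dist_le_mul]
    intro x hx y hy
    rw [Real.dist_eq, dist_eq_norm, Real.coe_toNNReal _ hKnn]
    exact hglip x hx y hy
  obtain ⟨G, hGlip, hGeq⟩ := hlipon.extend_real
  have hGb : ∀ a b, |G a - G b| ≤ K * ‖a - b‖ := by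
    intro a b
    have := hGlip.dist_le_mul a b
    rwa [Real.dist_eq, dist_eq_norm, Real.coe_toNNReal _ hKnn] at this
  have hgG₁ : ∫ ξ, g ξ ∂Q₁ = ∫ ξ, G ξ ∂Q₁ :=
    integral_congr_ae (hae₁.mono fun x hx => hGeq hx)
  have hgG₂ : ∫ ξ, g ξ ∂Q₂ = ∫ ξ, G ξ ∂Q₂ :=
    integral_congr_ae (hae₂.mono fun x hx => hGeq hx)
  have hDeq : ‖D‖ = (∫ ξ, G ξ ∂Q₁) - ∫ ξ, G ξ ∂Q₂ := by
    have h1 : ∫ ξ, g ξ ∂Q₁ = @inner ℝ _ _ e (∫ ξ, F ξ ∂Q₁) := integral_inner hI₁ e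
    have h2 : ∫ ξ, g ξ ∂Q₂ = @inner ℝ _ _ e (∫ ξ, F ξ ∂Q₂) := integral_inner hI₂ e
    have h3 : @inner ℝ _ _ e D = ‖D‖ := by
      rw [he, real_inner_smul_left, real_inner_self_eq_norm_mul_norm]
      field_simp
    rw [← hgG₁, ← hgG₂, h1, h2, ← inner_sub_right, ← hDdef, h3]
  rcases eq_or_lt_of_le hKnn with hK0 | hKpos
  · have hGconst : ∀ x, G x = G 0 := by
      intro x
      have h := hGb x 0
      rw [← hK0, zero_mul] at h
      have h2 : G x - G 0 = 0 := abs_nonpos_iff.mp h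
      linarith
    have hz : ‖D‖ = 0 := by
      rw [hDeq, integral_congr_ae (Filter.Eventually.of_forall hGconst),
        integral_congr_ae (Filter.Eventually.of_forall hGconst)]
      simp
    rw [hz]
    exact mul_nonneg hKnn (kdist_nonneg Q₁ Q₂ hmom₁ hmom₂)
  · set g' : EuclideanSpace ℝ (Fin k) → ℝ := fun x => K⁻¹ * G x with hg'def
    have hg' : ∀ a b, |g' a - g' b| ≤ ‖a - b‖ := by
      intro a b
      have habs : |g' a - g' b| = K⁻¹ * |G a - G b| := by
        rw [hg'def]
        simp only [← mul_sub, abs_mul, abs_of_nonneg (inv_nonneg.mpr hKnn)]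
      rw [habs]
      calc K⁻¹ * |G a - G b| ≤ K⁻¹ * (K * ‖a - b‖) :=
            mul_le_mul_of_nonneg_left (hGb a b) (inv_nonneg.mpr hKnn)
        _ = ‖a - b‖ := by field_simp
    have hmem := le_kdist Q₁ Q₂ hmom₁ hmom₂ hg'
    have e₁ : ∫ y, g' y ∂Q₁ = K⁻¹ * ∫ ξ, G ξ ∂Q₁ := integral_const_mul _ _
    have e₂ : ∫ y, g' y ∂Q₂ = K⁻¹ * ∫ ξ, G ξ ∂Q₂ := integral_const_mul _ _
    have hfinal : (∫ ξ, G ξ ∂Q₁) - ∫ ξ, G ξ ∂Q₂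
        = K * ((∫ y, g' y ∂Q₁) - ∫ y, g' y ∂Q₂) := by
      rw [e₁, e₂, ← mul_sub, ← mul_assoc, mul_inv_cancel₀ (ne_of_gt hKpos), one_mul]
    calc ‖D‖ = (∫ ξ, G ξ ∂Q₁) - ∫ ξ, G ξ ∂Q₂ := hDeq
      _ = K * ((∫ y, g' y ∂Q₁) - ∫ y, g' y ∂Q₂) := hfinal
      _ ≤ K * |(∫ y, g' y ∂Q₁) - ∫ y, g' y ∂Q₂| :=
          mul_le_mul_of_nonneg_left (le_abs_self _) hKnn
      _ ≤ K * Kdist Q₁ Q₂ := mul_le_mul_of_nonneg_left hmem hKnn
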